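/- Let P be an n×n positive stochastic real matrix with left Perron eigenvector l (so l ∈ Δ^{n-1}_+ and lP = l), and let v ∈ Δ^{n-1}_+. Then the matrix X = I_n − J_l − J_v satisfies X² = I_n and X P X⁻¹ = P + J_v(I_n − P). -/
import Mathlib


open Matrix BigOperators

/-- `Jmat v` is the matrix whose `(i,j)` entry is `v j`. -/
def Jmat {n : ℕ} (v : Fin n → ℝ) : Matrix (Fin n) (Fin n) ℝ :=
  Matrix.of fun _ j => v j

lemma Jmat_mul_Jmat {n : ℕ} (u w : Fin n → ℝ) (hu : ∑ j, u j = 1) :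
    Jmat u * Jmat w = Jmat w := by
  ext i j
  simp [Jmat, Matrix.mul_apply, ← Finset.sum_mul, hu]

lemma mul_Jmat {n : ℕ} (M : Matrix (Fin n) (Fin n) ℝ) (hM : ∀ i, ∑ j, M i j = 1)
    (w : Fin n → ℝ) : M * Jmat w = Jmat w := by
  ext i j
  simp [Jmat, Matrix.mul_apply, ← Finset.sum_mul, hM]

/-- If `P` is an `n × n` positive stochastic real matrix with left Perron
eigenvector `l`, and `v ∈ Δ^{n-1}_+`, then `X = I - J_l - J_v` satisfies `X² = I` and
`X P X⁻¹ = P + J_v (I - P)`. -/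
theorem stmt1 {n : ℕ} (P : Matrix (Fin n) (Fin n) ℝ)
    (hpos : ∀ i j, 0 < P i j) (hrow : ∀ i, ∑ j, P i j = 1)
    (l : Fin n → ℝ) (hl : ∀ j, 0 < l j) (hlsum : ∑ j, l j = 1)
    (hperron : ∀ j, ∑ i, l i * P i j = l j)
    (v : Fin n → ℝ) (hv : ∀ j, 0 < v j) (hvsum : ∑ j, v j = 1)
    (X : Matrix (Fin n) (Fin n) ℝ) (hX : X = 1 - Jmat l - Jmat v) :
    X ^ 2 = 1 ∧ X * P * X⁻¹ = P + Jmat v * (1 - P) := by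
  set A := Jmat l with hA
  set B := Jmat v with hB
  set w : Fin n → ℝ := fun j => ∑ k, v k * P k j with hw
  set W := Jmat w with hW
  have hwsum : ∑ j, w j = 1 := by
    rw [hw]
    simp only [Finset.sum_comm (γ := Fin n), ← Finset.mul_sum]
    simp [hrow, hvsum]
  have hAA : A * A = A := Jmat_mul_Jmat l l hlsum
  have hAB : A * B = B := Jmat_mul_Jmat l v hlsum
  have hBA : B * A = A := Jmat_mul_Jmat v l hvsum
  have hBB : B * B = B := Jmat_mul_Jmat v v hvsum
  have hWA : W * A = A := Jmat_mul_Jmat w l hwsum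
  have hWB : W * B = B := Jmat_mul_Jmat w v hwsum
  have hPA : P * A = A := mul_Jmat P hrow l
  have hPB : P * B = B := mul_Jmat P hrow v
  have hAP : A * P = A := by
    ext i j
    simp [hA, Jmat, Matrix.mul_apply, hperron]
  have hBP : B * P = W := by
    ext i j
    simp [hB, hW, Jmat, Matrix.mul_apply, hw]
  have hXX : X * X = 1 := by
    have expand : X * X = 1 - A - B - (A - A * A - A * B) - (B - B * A - B * B) := by
      rw [hX]; noncomm_ring
    rw [expand, hAA, hAB, hBA, hBB]
    abel
  refine ⟨by rw [sq, hXX], ?_⟩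
  have hXinv : X⁻¹ = X := Matrix.inv_eq_right_inv hXX
  rw [hXinv]
  have expand : X * P * X =
      P - A * P - B * P - (P * A - A * P * A - B * P * A)
        - (P * B - A * P * B - B * P * B) := by
    rw [hX]; noncomm_ring
  rw [expand, hAP, hBP, hPA, hAA, hWA, hPB, hAB, hWB]
  have : Jmat v * (1 - P) = B - W := by rw [mul_sub, mul_one, ← hB, hBP]
  rw [this]
  abel
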